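/- arXiv:1606.08369 — 8 statements merged into one kernel-verified Lean document; each statement's English description precedes it below -/
import Mathlib

section
/- For all real r with |r| < 1, the Mathieu series S(r) = \sum_{n\ge 1} 2n/(n^2+r^2)^2 admits the expansion S(r) = 2 \sum_{n\ge 0} (-1)^n (n+1) \zeta(2n+3) r^{2n}, where \zeta is the Riemann zeta function. -/
open MeasureTheory Real

/-- Riemann zeta function for real argument. -/
noncomputable def rzeta (a : ℝ) : ℝ := ∑' n : ℕ, 1 / ((n : ℝ) + 1) ^ a

lemma aux_hasSum_one_add (x : ℝ) (hx : |x| < 1) :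
    HasSum (fun n : ℕ => ((n : ℝ) + 1) * x ^ n) (1 / (1 - x) ^ 2) := by
  have h1 : HasSum (fun n : ℕ => (n : ℝ) * x ^ n) (x / (1 - x) ^ 2) :=
    hasSum_coe_mul_geometric_of_norm_lt_one (by simpa using hx)
  have h2 : HasSum (fun n : ℕ => x ^ n) ((1 - x)⁻¹) :=
    hasSum_geometric_of_norm_lt_one (by simpa using hx)
  have hne : (1 : ℝ) - x ≠ 0 := by
    intro h
    have : x = 1 := by linarith
    simp [this] at hx
  have := h1.add h2
  convert this using 1
  · ext n; ring
  · field_simp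
    ring

theorem mathieu_zeta_expansion (r : ℝ) (hr : |r| < 1) :
    (∑' n : ℕ, 2 * ((n : ℝ) + 1) / (((n : ℝ) + 1) ^ 2 + r ^ 2) ^ 2) =
      2 * ∑' n : ℕ, (-1) ^ n * ((n : ℝ) + 1) * rzeta (2 * n + 3) * r ^ (2 * n) := by
  set f : ℕ → ℕ → ℝ := fun n m =>
    2 * (-1) ^ n * ((n : ℝ) + 1) * r ^ (2 * n) / ((m : ℝ) + 1) ^ (2 * n + 3) with hf
  have hr2 : r ^ 2 < 1 := by
    have := abs_nonneg r
    nlinarith [sq_abs r]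
  have hr2' : |r ^ 2| < 1 := by rwa [abs_of_nonneg (sq_nonneg r)]
  -- Step B: for each m, the inner series sums to the Mathieu term
  have hB : ∀ m : ℕ, HasSum (fun n => f n m)
      (2 * ((m : ℝ) + 1) / (((m : ℝ) + 1) ^ 2 + r ^ 2) ^ 2) := by
    intro m
    set a : ℝ := (m : ℝ) + 1 with ha
    have ha1 : 1 ≤ a := by simp [ha]
    have ha0 : a ≠ 0 := by positivity
    have hx : |(-(r ^ 2) / a ^ 2)| < 1 := by
      rw [abs_div, abs_neg, abs_of_nonneg (sq_nonneg r), abs_of_nonneg (sq_nonneg a)]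
      have h1 : (1 : ℝ) ≤ a ^ 2 := by nlinarith
      rw [div_lt_one (by linarith)]
      linarith
    have h := (aux_hasSum_one_add _ hx).mul_left (2 / a ^ 3)
    have key : ∀ n : ℕ, 2 / a ^ 3 * (((n : ℝ) + 1) * (-(r ^ 2) / a ^ 2) ^ n) = f n m := by
      intro n
      have : (-(r ^ 2) / a ^ 2) ^ n = (-1) ^ n * r ^ (2 * n) / a ^ (2 * n) := by
        rw [div_pow, ← pow_mul, neg_pow, mul_comm 2 n]
        ring
      rw [this, hf]
      have hane : a ^ (2 * n + 3) ≠ 0 := pow_ne_zero _ ha0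
      field_simp
      ring
    have hval : 2 / a ^ 3 * (1 / (1 - -(r ^ 2) / a ^ 2) ^ 2) =
        2 * a / ((a ^ 2 + r ^ 2) ^ 2) := by
      have h1 : 1 - -(r ^ 2) / a ^ 2 = (a ^ 2 + r ^ 2) / a ^ 2 := by field_simp; ring
      rw [h1]
      have h2 : a ^ 2 + r ^ 2 ≠ 0 := by positivity
      field_simp
    rw [← hval]
    exact h.congr_fun fun n => (key n).symm
  -- Step A: summability over the product
  have hsum : Summable (Function.uncurry f) := by
    have hg1 : Summable (fun n : ℕ => 2 * (((n : ℝ) + 1) * (r ^ 2) ^ n)) :=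
      ((aux_hasSum_one_add _ hr2').summable).mul_left 2
    have hg2 : Summable (fun m : ℕ => 1 / ((m : ℝ) + 1) ^ 3) := by
      have := (summable_nat_add_iff (f := fun n : ℕ => 1 / (n : ℝ) ^ 3) 1).mpr
        (summable_one_div_nat_pow.mpr (by norm_num))
      exact this.congr fun m => by push_cast; ring
    have hprod := Summable.mul_of_nonneg hg1 hg2
      (by intro n; simp only [Pi.zero_apply]; positivity)
      (by intro m; simp only [Pi.zero_apply]; positivity)
    apply Summable.of_norm_bounded hprod
    rintro ⟨n, m⟩
    simp only [Function.uncurry, hf]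
    have ham : (1 : ℝ) ≤ (m : ℝ) + 1 := by simp
    have hle : ((m : ℝ) + 1) ^ 3 ≤ ((m : ℝ) + 1) ^ (2 * n + 3) :=
      pow_le_pow_right₀ ham (by omega)
    rw [Real.norm_eq_abs, abs_div, abs_of_nonneg (by positivity : (0:ℝ) ≤ ((m:ℝ)+1) ^ (2*n+3))]
    have habs : |2 * (-1 : ℝ) ^ n * ((n : ℝ) + 1) * r ^ (2 * n)|
        = 2 * (((n : ℝ) + 1) * (r ^ 2) ^ n) := by
      have h2 : |r| ^ (2 * n) = (r ^ 2) ^ n := by rw [pow_mul, sq_abs]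
      simp [abs_mul, abs_pow, abs_of_nonneg (show (0:ℝ) ≤ (n:ℝ)+1 by positivity), ← h2]
      ring
    rw [habs]
    rw [div_le_iff₀ (by positivity)]
    calc 2 * (((n : ℝ) + 1) * (r ^ 2) ^ n)
        = (2 * (((n : ℝ) + 1) * (r ^ 2) ^ n) * (1 / ((m:ℝ)+1) ^ 3)) * ((m:ℝ)+1) ^ 3 := by
          field_simp
      _ ≤ (2 * (((n : ℝ) + 1) * (r ^ 2) ^ n) * (1 / ((m:ℝ)+1) ^ 3)) * ((m:ℝ)+1) ^ (2*n+3) := by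
          apply mul_le_mul_of_nonneg_left hle; positivity
  -- Step C: the value of each column sum
  have hC : ∀ n : ℕ, (∑' m : ℕ, f n m)
      = (-1) ^ n * ((n : ℝ) + 1) * rzeta (2 * n + 3) * r ^ (2 * n) * 2 := by
    intro n
    have hz : rzeta (2 * (n : ℝ) + 3) = ∑' m : ℕ, 1 / ((m : ℝ) + 1) ^ (2 * n + 3) := by
      unfold rzeta
      congr 1; ext m
      rw [show (2 * (n : ℝ) + 3) = ((2 * n + 3 : ℕ) : ℝ) by push_cast; ring,
        Real.rpow_natCast]
    have : (∑' m : ℕ, f n m)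
        = (2 * (-1) ^ n * ((n : ℝ) + 1) * r ^ (2 * n)) * ∑' m : ℕ, 1 / ((m : ℝ) + 1) ^ (2 * n + 3) := by
      rw [← tsum_mul_left]
      congr 1; ext m
      rw [hf]; ring
    rw [this, ← hz]
    push_cast
    ring
  -- Combine
  calc (∑' m : ℕ, 2 * ((m : ℝ) + 1) / (((m : ℝ) + 1) ^ 2 + r ^ 2) ^ 2)
      = ∑' m : ℕ, ∑' n : ℕ, f n m := by
        congr 1; ext m; exact (hB m).tsum_eq.symm
    _ = ∑' n : ℕ, ∑' m : ℕ, f n m := Summable.tsum_comm hsum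
    _ = ∑' n : ℕ, ((-1) ^ n * ((n : ℝ) + 1) * rzeta (2 * n + 3) * r ^ (2 * n) * 2) := by
        congr 1; ext n; exact hC n
    _ = 2 * ∑' n : ℕ, (-1) ^ n * ((n : ℝ) + 1) * rzeta (2 * n + 3) * r ^ (2 * n) := by
        rw [tsum_mul_right]; ring
end

section
/- For r > 0, the Mathieu series S(r) = \sum_{n\ge 1} 2n/(n^2+r^2)^2 has the integral representation S(r) = (1/r) \int_0^\infty x \sin(r x)/(e^x - 1) dx. -/
open MeasureTheory Real Filter Set

lemma tendsto_mul_exp_zero (c : ℝ) (hc : 0 < c) :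
    Tendsto (fun x : ℝ => x * Real.exp (-(c * x))) atTop (nhds 0) := by
  have h0 : Tendsto (fun y : ℝ => y * Real.exp (-y)) atTop (nhds 0) := by
    simpa using Real.tendsto_pow_mul_exp_neg_atTop_nhds_zero 1
  have h1 : Tendsto (fun x : ℝ => c * x) atTop atTop :=
    tendsto_id.const_mul_atTop hc
  have h2 := (h0.comp h1).const_mul (1/c)
  rw [mul_zero] at h2
  refine h2.congr fun x => ?_
  simp only [Function.comp]
  field_simp

lemma integrableOn_mul_exp (c : ℝ) (hc : 0 < c) :
    IntegrableOn (fun x : ℝ => x * Real.exp (-(c * x))) (Set.Ioi 0) := by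
  have := integrableOn_rpow_mul_exp_neg_mul_rpow (p := 1) (s := 1) (b := c)
    (by norm_num) one_pos hc
  refine this.congr_fun (fun x hx => ?_) measurableSet_Ioi
  simp only [Real.rpow_one, neg_mul]

lemma integral_mul_exp (c : ℝ) (hc : 0 < c) :
    ∫ x in Set.Ioi (0:ℝ), x * Real.exp (-(c * x)) = 1 / c ^ 2 := by
  have h := integral_rpow_mul_exp_neg_mul_Ioi (a := 2) (r := c) (by norm_num) hc
  rw [show ∫ x in Set.Ioi (0:ℝ), x * Real.exp (-(c * x))
      = ∫ x in Set.Ioi (0:ℝ), x ^ ((2:ℝ) - 1) * Real.exp (-(c * x)) from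
    setIntegral_congr_fun measurableSet_Ioi (fun x hx => by norm_num), h,
    Real.Gamma_two]
  rw [show ((1:ℝ)/c) ^ (2:ℝ) = (1/c)^(2:ℕ) from Real.rpow_natCast _ 2]
  field_simp

lemma integral_cexp (z : ℂ) (hz : z.re < 0) :
    ∫ x in Set.Ioi (0:ℝ), (x:ℂ) * Complex.exp (z * x) = 1 / z ^ 2 := by
  have hz0 : z ≠ 0 := fun h => by simp [h] at hz
  set F : ℝ → ℂ := fun x => Complex.exp (z * x) * (x / z - 1 / z ^ 2) with hF
  have hre : ∀ x : ℝ, (z * (x:ℂ)).re = z.re * x := by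
    intro x; rw [Complex.mul_re]; simp
  have hderiv : ∀ x : ℝ, HasDerivAt F ((x:ℂ) * Complex.exp (z * x)) x := by
    intro x
    have h1 : HasDerivAt (fun x : ℝ => Complex.exp (z * x)) (z * Complex.exp (z * x)) x := by
      have := (Complex.hasDerivAt_exp (z * x)).comp x
        ((Complex.ofRealCLM.hasDerivAt.const_mul z))
      simpa [mul_comm, Function.comp_def] using this
    have h2 : HasDerivAt (fun x : ℝ => ((x:ℂ) / z - 1 / z ^ 2)) (1 / z) x := by
      have := (Complex.ofRealCLM.hasDerivAt (x := x)).div_const z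
      simp only [one_div] at this ⊢
      simpa using this.sub_const (z ^ 2)⁻¹
    have := h1.mul h2
    refine this.congr_deriv ?_
    have hw : z * z⁻¹ = 1 := mul_inv_cancel₀ hz0
    linear_combination ((x:ℂ) * Complex.exp (z * x) - Complex.exp (z * x) * z⁻¹) * hw
  have t1 : Tendsto (fun x : ℝ => x * Real.exp (z.re * x)) atTop (nhds 0) :=
    (tendsto_mul_exp_zero (-z.re) (by linarith)).congr fun x => by ring_nf
  have t2 : Tendsto (fun x : ℝ => Real.exp (z.re * x)) atTop (nhds 0) :=
    Real.tendsto_exp_atBot.comp ((tendsto_const_mul_atBot_of_neg hz).mpr tendsto_id)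
  have htop : Tendsto F atTop (nhds 0) := by
    rw [tendsto_zero_iff_norm_tendsto_zero]
    have glim : Tendsto (fun x : ℝ =>
        x * Real.exp (z.re * x) * (1/‖z‖) + Real.exp (z.re * x) * (1/(‖z‖)^2))
        atTop (nhds 0) := by
      have := (t1.mul_const (1/‖z‖)).add (t2.mul_const (1/(‖z‖)^2))
      simpa using this
    refine tendsto_of_tendsto_of_tendsto_of_le_of_le' tendsto_const_nhds glim
      (Eventually.of_forall fun x => norm_nonneg _) ?_
    filter_upwards [eventually_ge_atTop (0:ℝ)] with x hx
    rw [hF]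
    simp only [norm_mul, Complex.norm_exp, hre]
    have hb : ‖(x:ℂ) / z - 1 / z ^ 2‖ ≤ x * (1/‖z‖) + 1/(‖z‖)^2 := by
      refine (norm_sub_le _ _).trans ?_
      simp only [norm_div, Complex.norm_real, Real.norm_eq_abs, abs_of_nonneg hx, norm_pow, norm_one]
      ring_nf
      exact le_rfl
    calc Real.exp (z.re * x) * ‖(x:ℂ) / z - 1 / z ^ 2‖
        ≤ Real.exp (z.re * x) * (x * (1/‖z‖) + 1/(‖z‖)^2) :=
          mul_le_mul_of_nonneg_left hb (Real.exp_pos _).le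
      _ = x * Real.exp (z.re * x) * (1/‖z‖) + Real.exp (z.re * x) * (1/(‖z‖)^2) := by ring
  have hint : IntegrableOn (fun x : ℝ => (x:ℂ) * Complex.exp (z * x)) (Ioi 0) := by
    refine (integrableOn_mul_exp (-z.re) (by linarith)).mono' ?_ ?_
    · exact (Complex.continuous_ofReal.mul
        (Complex.continuous_exp.comp (continuous_const.mul Complex.continuous_ofReal))).aestronglyMeasurable
    · filter_upwards [ae_restrict_mem measurableSet_Ioi] with x hx
      rw [Set.mem_Ioi] at hx
      rw [norm_mul, Complex.norm_exp, hre,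
        Complex.norm_real, Real.norm_eq_abs, abs_of_pos hx]
      have : z.re * x = -(-z.re * x) := by ring
      rw [this]
  have := integral_Ioi_of_hasDerivAt_of_tendsto
    ((hderiv 0).continuousAt.continuousWithinAt) (fun x _ => hderiv x) hint htop
  rw [this, hF]
  simp

lemma integrableOn_cexp (z : ℂ) (hz : z.re < 0) :
    IntegrableOn (fun x : ℝ => (x:ℂ) * Complex.exp (z * x)) (Set.Ioi 0) := by
  have hre : ∀ x : ℝ, (z * (x:ℂ)).re = z.re * x := by
    intro x; rw [Complex.mul_re]; simp
  refine (integrableOn_mul_exp (-z.re) (by linarith)).mono' ?_ ?_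
  · exact (Complex.continuous_ofReal.mul
      (Complex.continuous_exp.comp (continuous_const.mul Complex.continuous_ofReal))).aestronglyMeasurable
  · filter_upwards [ae_restrict_mem measurableSet_Ioi] with x hx
    rw [Set.mem_Ioi] at hx
    rw [norm_mul, Complex.norm_exp, hre,
      Complex.norm_real, Real.norm_eq_abs, abs_of_pos hx]
    have : z.re * x = -(-z.re * x) := by ring
    rw [this]

lemma integral_x_exp_sin (c r : ℝ) (hc : 0 < c) :
    ∫ x in Set.Ioi (0:ℝ), x * Real.exp (-(c*x)) * Real.sin (r*x)
      = 2*c*r/(c^2+r^2)^2 := by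
  set z : ℂ := -c + r * Complex.I with hzdef
  have hre : z.re = -c := by simp [hzdef]
  have him : z.im = r := by simp [hzdef]
  have hz : z.re < 0 := by rw [hre]; linarith
  have key := integral_cexp z hz
  have hint := integrableOn_cexp z hz
  have him2 : ((1:ℂ)/z^2).im = 2*c*r/(c^2+r^2)^2 := by
    rw [one_div, show z^2 = z*z by ring, Complex.inv_im, Complex.mul_im,
      Complex.normSq_mul]
    simp only [Complex.normSq_apply, hre, him]
    rw [show (-c)*(-c)+r*r = c^2+r^2 from by ring,
      div_eq_div_iff (by positivity) (by positivity)]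
    ring
  have hpt : ∀ x : ℝ, ((x:ℂ) * Complex.exp (z * x)).im
      = x * Real.exp (-(c*x)) * Real.sin (r*x) := by
    intro x
    rw [Complex.mul_im, Complex.exp_im, Complex.exp_re, Complex.mul_re, Complex.mul_im]
    simp [hre, him]
    ring
  calc ∫ x in Set.Ioi (0:ℝ), x * Real.exp (-(c*x)) * Real.sin (r*x)
      = ∫ x in Set.Ioi (0:ℝ), ((x:ℂ) * Complex.exp (z * x)).im :=
        (setIntegral_congr_fun measurableSet_Ioi fun x _ => (hpt x).symm)
    _ = (∫ x in Set.Ioi (0:ℝ), (x:ℂ) * Complex.exp (z * x)).im := integral_im hint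
    _ = 2*c*r/(c^2+r^2)^2 := by rw [key, him2]

theorem mathieu_integral_representation (r : ℝ) (hr : 0 < r) :
    (∑' n : ℕ, 2 * ((n : ℝ) + 1) / (((n : ℝ) + 1) ^ 2 + r ^ 2) ^ 2) =
      (1 / r) * ∫ x in Set.Ioi (0 : ℝ), x * Real.sin (r * x) / (Real.exp x - 1) := by
  set F : ℕ → ℝ → ℝ := fun n x => x * Real.exp (-(((n:ℝ)+1) * x)) * Real.sin (r*x) with hFdef
  have hc : ∀ n : ℕ, (0:ℝ) < (n:ℝ)+1 := fun n => by positivity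
  have hbd : ∀ n : ℕ, ∀ᵐ x ∂(volume.restrict (Set.Ioi (0:ℝ))),
      ‖F n x‖ ≤ x * Real.exp (-(((n:ℝ)+1) * x)) := by
    intro n
    filter_upwards [ae_restrict_mem measurableSet_Ioi] with x hx
    rw [Set.mem_Ioi] at hx
    rw [hFdef]
    simp only [Real.norm_eq_abs, abs_mul, abs_of_pos hx, abs_of_pos (Real.exp_pos _)]
    have h1 : |Real.sin (r*x)| ≤ 1 := Real.abs_sin_le_one (r*x)
    exact mul_le_of_le_one_right (by positivity) h1
  have hFint : ∀ n : ℕ, Integrable (F n) (volume.restrict (Set.Ioi (0:ℝ))) := by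
    intro n
    refine (integrableOn_mul_exp _ (hc n)).mono' ?_ (hbd n)
    exact ((by fun_prop : Continuous (F n))).aestronglyMeasurable
  have hsum : Summable fun n : ℕ => ∫ x in Set.Ioi (0:ℝ), ‖F n x‖ := by
    have hbase : Summable (fun n : ℕ => 1/(((n:ℝ)+1)^2)) := by
      have h0 : Summable (fun n : ℕ => 1/((n:ℝ)^2)) :=
        Real.summable_one_div_nat_pow.mpr one_lt_two
      have := (summable_nat_add_iff 1).mpr h0
      refine this.congr fun n => ?_
      push_cast
      ring_nf
    refine Summable.of_nonneg_of_le
      (fun n => integral_nonneg fun x => norm_nonneg _) (fun n => ?_) hbase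
    calc ∫ x in Set.Ioi (0:ℝ), ‖F n x‖
        ≤ ∫ x in Set.Ioi (0:ℝ), x * Real.exp (-(((n:ℝ)+1) * x)) :=
          integral_mono_ae (hFint n).norm (integrableOn_mul_exp _ (hc n)) (hbd n)
      _ = 1/(((n:ℝ)+1)^2) := integral_mul_exp _ (hc n)
  have hswap := MeasureTheory.integral_tsum_of_summable_integral_norm hFint hsum
  have hval : ∀ n : ℕ, ∫ x in Set.Ioi (0:ℝ), F n x
      = 2*((n:ℝ)+1)*r/((((n:ℝ)+1))^2+r^2)^2 := fun n => integral_x_exp_sin _ r (hc n)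
  have hpt : ∀ x ∈ Set.Ioi (0:ℝ), (∑' n : ℕ, F n x)
      = x * Real.sin (r*x) / (Real.exp x - 1) := by
    intro x hx
    rw [Set.mem_Ioi] at hx
    have hlt : Real.exp (-x) < 1 := Real.exp_lt_one_iff.mpr (by linarith)
    have hq : ∀ n : ℕ, Real.exp (-(((n:ℝ)+1) * x)) = Real.exp (-x) ^ (n+1) := by
      intro n
      rw [← Real.exp_nat_mul]
      push_cast
      ring_nf
    have hgeo : ∑' n : ℕ, Real.exp (-x) ^ (n+1)
        = Real.exp (-x) / (1 - Real.exp (-x)) := by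
      have h := tsum_geometric_of_lt_one (Real.exp_pos (-x)).le hlt
      calc ∑' n : ℕ, Real.exp (-x) ^ (n+1)
          = ∑' n : ℕ, Real.exp (-x) ^ n * Real.exp (-x) := by
            refine tsum_congr fun n => ?_; rw [pow_succ]
        _ = (1 - Real.exp (-x))⁻¹ * Real.exp (-x) := by rw [tsum_mul_right, h]
        _ = Real.exp (-x) / (1 - Real.exp (-x)) := by ring
    have hFx : ∀ n : ℕ, F n x = (x * Real.sin (r*x)) * Real.exp (-x) ^ (n+1) := by
      intro n
      rw [hFdef]
      simp only
      rw [hq n]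
      ring
    calc (∑' n : ℕ, F n x)
        = ∑' n : ℕ, (x * Real.sin (r*x)) * Real.exp (-x) ^ (n+1) := tsum_congr hFx
      _ = (x * Real.sin (r*x)) * (Real.exp (-x) / (1 - Real.exp (-x))) := by
          rw [tsum_mul_left, hgeo]
      _ = x * Real.sin (r*x) / (Real.exp x - 1) := by
          have h1 : (1:ℝ) < Real.exp x := Real.one_lt_exp_iff.mpr hx
          have h2 : 1 - Real.exp (-x) ≠ 0 := by
            rw [Real.exp_neg]
            have : (Real.exp x)⁻¹ < 1 := inv_lt_one_of_one_lt₀ h1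
            linarith
          rw [Real.exp_neg]
          have h3 : Real.exp x ≠ 0 := (Real.exp_pos x).ne'
          have h4 : Real.exp x - 1 ≠ 0 := by linarith
          field_simp
  have hint_eq : (∫ x in Set.Ioi (0:ℝ), x * Real.sin (r*x) / (Real.exp x - 1))
      = ∑' n : ℕ, ∫ x in Set.Ioi (0:ℝ), F n x := by
    rw [hswap]
    exact (setIntegral_congr_fun measurableSet_Ioi hpt).symm
  rw [hint_eq, ← tsum_mul_left]
  refine tsum_congr fun n => ?_
  rw [hval n]
  field_simp
end

section
/- For \mu > 0 and real r with |r| < 1, the generalized Mathieu series S_\mu(r) = \sum_{n\ge 1} 2n/(n^2+r^2)^{\mu+1} admits the expansion S_\mu(r) = 2 \sum_{n\ge 0} (-1)^n \binom{\mu+n}{n} \zeta(2\mu+2n+1) r^{2n}, where \binom{\mu+n}{n} = \Gamma(\mu+n+1)/(\Gamma(\mu+1) n!) is the generalized binomial coefficient. -/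
open MeasureTheory Real

/-- Generalized binomial coefficient `binom (μ+n) n = Γ(μ+n+1)/(Γ(μ+1) n!)`. -/
noncomputable def gbinom (μ : ℝ) (n : ℕ) : ℝ :=
  Real.Gamma (μ + n + 1) / (Real.Gamma (μ + 1) * n.factorial)

lemma gbinom_pos {μ : ℝ} (hμ : 0 < μ) (n : ℕ) : 0 < gbinom μ n := by
  unfold gbinom
  have h1 : (0:ℝ) < Real.Gamma (μ + n + 1) := Real.Gamma_pos_of_pos (by positivity)
  have h2 : (0:ℝ) < Real.Gamma (μ + 1) := Real.Gamma_pos_of_pos (by positivity)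
  have h3 : (0:ℝ) < (n.factorial : ℝ) := by exact_mod_cast n.factorial_pos
  positivity

lemma gbinom_succ {μ : ℝ} (hμ : 0 < μ) (n : ℕ) :
    gbinom μ (n+1) = gbinom μ n * ((μ + n + 1) / (n + 1)) := by
  unfold gbinom
  have h : μ + (n+1 : ℕ) + 1 = (μ + n + 1) + 1 := by push_cast; ring
  rw [h, Real.Gamma_add_one (by positivity), Nat.factorial_succ]
  have h2 : (0:ℝ) < Real.Gamma (μ + 1) := Real.Gamma_pos_of_pos (by positivity)
  have h3 : (0:ℝ) < (n.factorial : ℝ) := by exact_mod_cast n.factorial_pos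
  have h4 : ((n:ℝ) + 1) ≠ 0 := by positivity
  push_cast
  field_simp

lemma gbinom_zero {μ : ℝ} (hμ : 0 < μ) : gbinom μ 0 = 1 := by
  unfold gbinom
  have h2 : (0:ℝ) < Real.Gamma (μ + 1) := Real.Gamma_pos_of_pos (by positivity)
  simp [div_self h2.ne']

lemma summable_gbinom {μ : ℝ} (hμ : 0 < μ) {x : ℝ} (hx0 : 0 ≤ x) (hx1 : x < 1) :
    Summable (fun n : ℕ => gbinom μ n * x ^ n) := by
  rcases eq_or_lt_of_le hx0 with h0 | h0
  · apply summable_of_ne_finset_zero (s := {0})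
    intro n hn
    simp only [Finset.mem_singleton] at hn
    rw [← h0, zero_pow hn, mul_zero]
  · apply summable_of_ratio_test_tendsto_lt_one hx1
    · filter_upwards with n
      exact (mul_pos (gbinom_pos hμ n) (pow_pos h0 n)).ne'
    · have heq : ∀ n : ℕ, ‖gbinom μ (n+1) * x ^ (n+1)‖ / ‖gbinom μ n * x ^ n‖
          = x * μ * (1 / ((n:ℝ) + 1)) + x := by
        intro n
        rw [Real.norm_of_nonneg (mul_pos (gbinom_pos hμ (n+1)) (pow_pos h0 (n+1))).le,
          Real.norm_of_nonneg (mul_pos (gbinom_pos hμ n) (pow_pos h0 n)).le]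
        rw [gbinom_succ hμ n, pow_succ]
        have hg := (gbinom_pos hμ n).ne'
        have hp := (pow_pos h0 n).ne'
        field_simp
        ring
      have : Filter.Tendsto (fun n : ℕ => x * μ * (1 / ((n:ℝ) + 1)) + x)
          Filter.atTop (nhds (x * μ * 0 + x)) :=
        ((tendsto_one_div_add_atTop_nhds_zero_nat).const_mul (x * μ)).add tendsto_const_nhds
      simp only [mul_zero, zero_add] at this
      exact this.congr (fun n => (heq n).symm)

lemma hasSum_binom {μ : ℝ} (hμ : 0 < μ) {x : ℝ} (hx0 : 0 ≤ x) (hx1 : x < 1) :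
    HasSum (fun n : ℕ => (-1) ^ n * gbinom μ n * x ^ n) ((1 + x) ^ (-(μ + 1))) := by
  rcases eq_or_lt_of_le hx0 with h0 | h0
  · -- x = 0
    rw [← h0]
    have h := hasSum_single (f := fun n : ℕ => (-1) ^ n * gbinom μ n * (0:ℝ) ^ n) 0
      (fun b hb => by simp [zero_pow hb])
    simpa [gbinom_zero hμ] using h
  · have h1x : (0:ℝ) < 1 + x := by linarith
    set ν := volume.restrict (Set.Ioi (0:ℝ)) with hν
    set F : ℕ → ℝ → ℝ :=
      fun n t => ((-x) ^ n / n.factorial) * (Real.exp (-t) * t ^ (μ + n)) with hF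
    have hμn : ∀ n : ℕ, (0:ℝ) < μ + n + 1 := fun n => by positivity
    have hint : ∀ n : ℕ, IntegrableOn (fun t => Real.exp (-t) * t ^ (μ + (n:ℝ)))
        (Set.Ioi 0) volume := by
      intro n
      have h := Real.GammaIntegral_convergent (hμn n)
      rw [show μ + (n:ℝ) + 1 - 1 = μ + n by ring] at h
      exact h
    have hGam : ∀ n : ℕ, ∫ t in Set.Ioi (0:ℝ), Real.exp (-t) * t ^ (μ + (n:ℝ))
        = Real.Gamma (μ + n + 1) := by
      intro n
      rw [Real.Gamma_eq_integral (hμn n), show μ + (n:ℝ) + 1 - 1 = μ + n by ring]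
    have hF_int : ∀ n : ℕ, Integrable (F n) ν := fun n => (hint n).const_mul _
    have hnorm : ∀ n : ℕ, ∫ t, ‖F n t‖ ∂ν = Real.Gamma (μ+1) * (gbinom μ n * x ^ n) := by
      intro n
      have hcong : ∀ t ∈ Set.Ioi (0:ℝ),
          ‖F n t‖ = (x ^ n / n.factorial) * (Real.exp (-t) * t ^ (μ + n)) := by
        intro t ht
        have ht' : (0:ℝ) < t := ht
        simp only [hF, Real.norm_eq_abs, abs_mul, abs_div, abs_pow, abs_neg]
        rw [abs_of_nonneg hx0, Nat.abs_cast,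
          abs_of_pos (Real.exp_pos _), abs_of_pos (Real.rpow_pos_of_pos ht' _)]
      rw [hν, MeasureTheory.setIntegral_congr_fun measurableSet_Ioi hcong,
        MeasureTheory.integral_const_mul, hGam n]
      have h2 : (0:ℝ) < Real.Gamma (μ + 1) := Real.Gamma_pos_of_pos (by positivity)
      have h3 : (0:ℝ) < (n.factorial : ℝ) := by exact_mod_cast n.factorial_pos
      unfold gbinom
      field_simp
    have hF_norm : Summable (fun n : ℕ => ∫ t, ‖F n t‖ ∂ν) := by
      simp only [hnorm]
      exact (summable_gbinom hμ hx0 hx1).mul_left _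
    have key := MeasureTheory.hasSum_integral_of_summable_integral_norm hF_int hF_norm
    have hval : ∀ n : ℕ, ∫ t, F n t ∂ν = ((-x) ^ n / n.factorial) * Real.Gamma (μ + n + 1) := by
      intro n
      simp only [hF, hν]
      rw [MeasureTheory.integral_const_mul, hGam n]
    have hpt : ∀ t ∈ Set.Ioi (0:ℝ), (∑' n : ℕ, F n t) = t ^ μ * Real.exp (-((1+x)*t)) := by
      intro t ht
      have ht' : (0:ℝ) < t := ht
      have h1 : ∀ n : ℕ, F n t = (Real.exp (-t) * t ^ μ) * ((-x*t) ^ n / n.factorial) := by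
        intro n
        simp only [hF]
        rw [Real.rpow_add ht', Real.rpow_natCast, mul_pow]
        ring
      rw [tsum_congr h1, tsum_mul_left]
      have hexp : (∑' n : ℕ, (-x*t) ^ n / (n.factorial : ℝ)) = Real.exp (-x*t) := by
        rw [Real.exp_eq_exp_ℝ, NormedSpace.exp_eq_tsum_div]
      rw [hexp, show -((1 + x) * t) = -t + -x * t by ring, Real.exp_add]
      ring
    have hI : ∫ t, (∑' n : ℕ, F n t) ∂ν = (1+x) ^ (-(μ+1)) * Real.Gamma (μ+1) := by
      rw [hν, MeasureTheory.setIntegral_congr_fun measurableSet_Ioi hpt]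
      have := Real.integral_rpow_mul_exp_neg_mul_Ioi (a := μ+1) (r := 1+x) (by positivity) h1x
      rw [show μ + 1 - 1 = μ by ring] at this
      rw [this, one_div, Real.inv_rpow h1x.le, ← Real.rpow_neg h1x.le]
    rw [hI] at key
    have key2 := key.mul_left (Real.Gamma (μ+1))⁻¹
    have h2 : (0:ℝ) < Real.Gamma (μ + 1) := Real.Gamma_pos_of_pos (by positivity)
    have hval2 : (Real.Gamma (μ+1))⁻¹ * ((1+x) ^ (-(μ+1)) * Real.Gamma (μ+1))
        = (1+x) ^ (-(μ+1)) := by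
      rw [mul_comm ((1+x) ^ (-(μ+1))) (Real.Gamma (μ+1)), inv_mul_cancel_left₀ h2.ne']
    have heq : ∀ n : ℕ, (Real.Gamma (μ+1))⁻¹ * (∫ t, F n t ∂ν)
        = (-1) ^ n * gbinom μ n * x ^ n := by
      intro n
      rw [hval n]
      have h3 : (0:ℝ) < (n.factorial : ℝ) := by exact_mod_cast n.factorial_pos
      unfold gbinom
      rw [show (-x) ^ n = (-1)^n * x ^ n from neg_pow x n]
      field_simp
    rw [hval2] at key2
    simp only [heq] at key2
    exact key2

noncomputable def gAux (μ r : ℝ) (n m : ℕ) : ℝ :=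
  2 * ((-1) ^ n * gbinom μ n * r ^ (2 * n)) * ((m : ℝ) + 1) ^ (-(2 * μ + 2 * (n : ℝ) + 1))

theorem generalized_mathieu_zeta_expansion (μ r : ℝ) (hμ : 0 < μ) (hr : |r| < 1) :
    (∑' n : ℕ, 2 * ((n : ℝ) + 1) / (((n : ℝ) + 1) ^ 2 + r ^ 2) ^ (μ + 1)) =
      2 * ∑' n : ℕ, (-1) ^ n * gbinom μ n * rzeta (2 * μ + 2 * n + 1) * r ^ (2 * n) := by
  have hx1 : r ^ 2 < 1 := by nlinarith [sq_abs r, abs_nonneg r]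
  have hx0 : (0:ℝ) ≤ r ^ 2 := sq_nonneg r
  -- summability of 1/(m+1)^a for a > 1
  have hsummable_pow : ∀ a : ℝ, 1 < a → Summable (fun m : ℕ => 1 / ((m:ℝ) + 1) ^ a) := by
    intro a ha
    have h := Real.summable_one_div_nat_rpow.mpr ha
    have h2 := (summable_nat_add_iff (f := fun n : ℕ => 1 / (n:ℝ) ^ a) 1).mpr h
    simpa using h2
  have hagt : ∀ n : ℕ, (1:ℝ) < 2 * μ + 2 * (n:ℝ) + 1 := by
    intro n
    have := Nat.cast_nonneg (α := ℝ) n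
    linarith
  -- row sums
  have hrow : ∀ m : ℕ, HasSum (fun n => gAux μ r n m)
      (2 * ((m:ℝ) + 1) / (((m:ℝ) + 1) ^ 2 + r ^ 2) ^ (μ + 1)) := by
    intro m
    set c : ℝ := (m:ℝ) + 1 with hcdef
    have hc0 : (0:ℝ) < c := by positivity
    have hc1 : (1:ℝ) ≤ c := le_add_of_nonneg_left (Nat.cast_nonneg m)
    set x : ℝ := r ^ 2 / c ^ 2 with hxdef
    have hx0' : 0 ≤ x := by positivity
    have hx1' : x < 1 := by
      rw [hxdef, div_lt_one (by positivity)]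
      nlinarith
    have hb := (hasSum_binom hμ hx0' hx1').mul_left (2 * c ^ (-(2*μ+1)))
    have hfun : ∀ n : ℕ, 2 * c ^ (-(2*μ+1)) * ((-1) ^ n * gbinom μ n * x ^ n)
        = gAux μ r n m := by
      intro n
      unfold gAux
      rw [← hcdef]
      have h1 : x ^ n = r ^ (2*n) * (c ^ (2*n))⁻¹ := by
        rw [hxdef, div_pow, ← pow_mul, ← pow_mul, div_eq_mul_inv]
      have h2 : c ^ (-(2*μ+1)) * (c ^ (2*n))⁻¹ = c ^ (-(2*μ + 2*(n:ℝ) + 1)) := by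
        rw [← Real.rpow_natCast c (2*n), ← Real.rpow_neg hc0.le, ← Real.rpow_add hc0]
        push_cast
        ring_nf
      rw [h1, show 2 * c ^ (-(2*μ+1)) * ((-1)^n * gbinom μ n * (r^(2*n) * (c ^ (2*n))⁻¹))
          = 2 * ((-1)^n * gbinom μ n * r^(2*n)) * (c ^ (-(2*μ+1)) * (c ^ (2*n))⁻¹) by ring, h2]
    have hval : 2 * c ^ (-(2*μ+1)) * (1 + x) ^ (-(μ+1))
        = 2 * c / (c ^ 2 + r ^ 2) ^ (μ+1) := by
      have h1x : (0:ℝ) < 1 + x := by positivity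
      have hsplit : c ^ 2 + r ^ 2 = c ^ 2 * (1 + x) := by
        rw [hxdef]
        field_simp
      rw [hsplit, Real.mul_rpow (by positivity) h1x.le]
      have hcc : ((c ^ 2 : ℝ)) ^ (μ+1) = c ^ (2*(μ+1)) := by
        rw [← Real.rpow_natCast c 2, ← Real.rpow_mul hc0.le]
        norm_num
      rw [hcc, show 2*(μ+1) = (2*μ+1) + 1 by ring, Real.rpow_add hc0, Real.rpow_one,
        Real.rpow_neg hc0.le, Real.rpow_neg h1x.le]
      have hA : (0:ℝ) < c ^ (2*μ+1) := Real.rpow_pos_of_pos hc0 _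
      have hB : (0:ℝ) < (1+x) ^ (μ+1) := Real.rpow_pos_of_pos h1x _
      field_simp
    rw [hval] at hb
    exact hb.congr_fun fun n => (hfun n).symm
  -- column sums
  have hcol : ∀ n : ℕ, HasSum (fun m => gAux μ r n m)
      (2 * ((-1) ^ n * gbinom μ n * rzeta (2*μ + 2*(n:ℝ) + 1) * r ^ (2*n))) := by
    intro n
    have hz : HasSum (fun m : ℕ => 1 / ((m:ℝ) + 1) ^ (2*μ + 2*(n:ℝ) + 1))
        (rzeta (2*μ + 2*(n:ℝ) + 1)) := (hsummable_pow _ (hagt n)).hasSum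
    have h := hz.mul_left (2 * ((-1) ^ n * gbinom μ n * r ^ (2*n)))
    rw [show 2 * ((-1)^n * gbinom μ n * r^(2*n)) * rzeta (2*μ + 2*(n:ℝ) + 1)
        = 2 * ((-1)^n * gbinom μ n * rzeta (2*μ + 2*(n:ℝ) + 1) * r^(2*n)) by ring] at h
    refine h.congr_fun fun m => Eq.symm ?_
    unfold gAux
    have hm0 : (0:ℝ) < (m:ℝ) + 1 := by positivity
    rw [Real.rpow_neg hm0.le, one_div]
  -- absolute values
  have habs : ∀ n m : ℕ, |gAux μ r n m|
      = 2 * (gbinom μ n * (r^2) ^ n) * (1 / ((m:ℝ) + 1) ^ (2*μ + 2*(n:ℝ) + 1)) := by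
    intro n m
    have hm0 : (0:ℝ) < (m:ℝ) + 1 := by positivity
    have h1 : gAux μ r n m = ((-1:ℝ)) ^ n *
        (2 * (gbinom μ n * (r^2) ^ n) * (1 / ((m:ℝ) + 1) ^ (2*μ + 2*(n:ℝ) + 1))) := by
      unfold gAux
      rw [Real.rpow_neg hm0.le, one_div, ← pow_mul]
      ring
    rw [h1, abs_mul, abs_pow, abs_neg, abs_one, one_pow, one_mul, abs_of_nonneg ?_]
    have hg := (gbinom_pos hμ n).le
    have hp : (0:ℝ) ≤ (r^2) ^ n := pow_nonneg hx0 n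
    have hq : (0:ℝ) ≤ 1 / ((m:ℝ) + 1) ^ (2*μ + 2*(n:ℝ) + 1) := by positivity
    positivity
  -- monotonicity of rzeta
  have hrz_le : ∀ n : ℕ, rzeta (2*μ + 2*(n:ℝ) + 1) ≤ rzeta (2*μ + 1) := by
    intro n
    unfold rzeta
    refine Summable.tsum_le_tsum (fun m => ?_) (hsummable_pow _ (hagt n))
      (hsummable_pow _ (by linarith))
    have hm1 : (1:ℝ) ≤ (m:ℝ) + 1 := le_add_of_nonneg_left (Nat.cast_nonneg m)
    apply one_div_le_one_div_of_le (Real.rpow_pos_of_pos (by positivity) _)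
    exact Real.rpow_le_rpow_of_exponent_le hm1 (by linarith [Nat.cast_nonneg (α := ℝ) n])
  -- summability of the double series
  have hGsum : Summable (fun p : ℕ × ℕ => gAux μ r p.1 p.2) := by
    rw [← summable_abs_iff]
    rw [summable_prod_of_nonneg (fun p => abs_nonneg _)]
    constructor
    · intro n
      simp only [habs]
      exact (hsummable_pow _ (hagt n)).mul_left _
    · have hterm : ∀ n : ℕ, (∑' m : ℕ, |gAux μ r n m|)
          = 2 * (gbinom μ n * (r^2) ^ n) * rzeta (2*μ + 2*(n:ℝ) + 1) := by
        intro n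
        simp only [habs]
        rw [tsum_mul_left]
        rfl
      apply Summable.of_nonneg_of_le (fun n => tsum_nonneg fun m => abs_nonneg _)
        (fun n => ?_) ((summable_gbinom hμ hx0 hx1).mul_left (2 * rzeta (2*μ+1)))
      rw [hterm n]
      have hnn : (0:ℝ) ≤ 2 * (gbinom μ n * (r^2) ^ n) := by
        have := (gbinom_pos hμ n).le
        have := pow_nonneg hx0 n
        positivity
      calc 2 * (gbinom μ n * (r^2) ^ n) * rzeta (2*μ + 2*(n:ℝ) + 1)
          ≤ 2 * (gbinom μ n * (r^2) ^ n) * rzeta (2*μ + 1) :=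
            mul_le_mul_of_nonneg_left (hrz_le n) hnn
        _ = 2 * rzeta (2*μ+1) * (gbinom μ n * (r^2) ^ n) := by ring
  -- final assembly
  calc (∑' m : ℕ, 2 * ((m:ℝ) + 1) / (((m:ℝ) + 1) ^ 2 + r ^ 2) ^ (μ + 1))
      = ∑' m : ℕ, ∑' n : ℕ, gAux μ r n m := tsum_congr fun m => ((hrow m).tsum_eq).symm
    _ = ∑' n : ℕ, ∑' m : ℕ, gAux μ r n m := Summable.tsum_comm hGsum
    _ = ∑' n : ℕ, 2 * ((-1) ^ n * gbinom μ n * rzeta (2*μ + 2*(n:ℝ) + 1) * r ^ (2*n)) :=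
        tsum_congr fun n => (hcol n).tsum_eq
    _ = 2 * ∑' n : ℕ, (-1) ^ n * gbinom μ n * rzeta (2 * μ + 2 * n + 1) * r ^ (2 * n) :=
        tsum_mul_left
end

section
/- For real \alpha > 0 and s > 0, the Mellin transform of the p-extended zeta function with respect to p satisfies \int_0^\infty p^{s-1} \zeta_p(\alpha)\, dp = \frac{\Gamma(s)\,\Gamma(\alpha+s)}{\Gamma(\alpha)}\, \zeta(\alpha+s). -/
open MeasureTheory Real

/-- The p-extended Riemann zeta function. -/
noncomputable def zetaP (p a : ℝ) : ℝ :=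
  (1 / Real.Gamma a) * ∫ x in Set.Ioi (0 : ℝ),
    x ^ (a - 1) * Real.exp (-p / x) / (Real.exp x - 1)

open Set

lemma geom_series (x : ℝ) (hx : 0 < x) :
    ∑' n : ℕ, Real.exp (-(((n : ℝ) + 1) * x)) = 1 / (Real.exp x - 1) := by
  have h1 : Real.exp (-x) < 1 := exp_lt_one_iff.2 (by linarith)
  have h0 : (0:ℝ) ≤ Real.exp (-x) := (exp_pos _).le
  have hgeo := tsum_geometric_of_lt_one h0 h1
  have : ∑' n : ℕ, Real.exp (-(((n : ℝ) + 1) * x))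
      = ∑' n : ℕ, Real.exp (-x) * Real.exp (-x) ^ n := by
    refine tsum_congr fun n => ?_
    rw [← Real.exp_nat_mul, ← Real.exp_add]
    ring_nf
  rw [this, tsum_mul_left, hgeo]
  have he : Real.exp x - 1 ≠ 0 := by
    have : 1 < Real.exp x := Real.one_lt_exp_iff.2 hx
    linarith
  have hne : 1 - Real.exp (-x) ≠ 0 := by linarith
  field_simp
  rw [Real.exp_neg]
  field_simp

lemma summable_exp_geom (x : ℝ) (hx : 0 < x) :
    Summable fun n : ℕ => Real.exp (-(((n : ℝ) + 1) * x)) := by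
  have h1 : Real.exp (-x) < 1 := exp_lt_one_iff.2 (by linarith)
  have h0 : (0:ℝ) ≤ Real.exp (-x) := (exp_pos _).le
  have heq : (fun n : ℕ => Real.exp (-(((n : ℝ) + 1) * x)))
      = fun n : ℕ => Real.exp (-x) * Real.exp (-x) ^ n := by
    funext n
    rw [← Real.exp_nat_mul, ← Real.exp_add]
    ring_nf
  rw [heq]
  exact (summable_geometric_of_lt_one h0 h1).mul_left _

lemma lint_gamma {a r : ℝ} (ha : 0 < a) (hr : 0 < r) :
    ∫⁻ t in Set.Ioi (0:ℝ), ENNReal.ofReal (t ^ (a - 1) * Real.exp (-(r * t)))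
      = ENNReal.ofReal ((1 / r) ^ a * Real.Gamma a) := by
  rw [← integral_rpow_mul_exp_neg_mul_Ioi ha hr]
  refine (ofReal_integral_eq_lintegral_ofReal ?_ ?_).symm
  · have h := integrableOn_rpow_mul_exp_neg_mul_rpow (by linarith : (-1:ℝ) < a - 1) one_pos hr
    simpa [Real.rpow_one, IntegrableOn] using h
  · filter_upwards [ae_restrict_mem measurableSet_Ioi] with x hx
    exact mul_nonneg (rpow_nonneg (le_of_lt hx) _) (exp_pos _).le

lemma summable_shift {σ : ℝ} (hσ : 1 < σ) :
    Summable fun n : ℕ => 1 / ((n : ℝ) + 1) ^ σ := by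
  have := (summable_nat_add_iff 1).2 (Real.summable_one_div_nat_rpow.2 hσ)
  simpa using this

lemma tsum_toReal_eq {f : ℕ → ℝ} (hf : ∀ n, 0 ≤ f n) :
    ∑' n, f n = (∑' n, ENNReal.ofReal (f n)).toReal := by
  by_cases h : Summable f
  · rw [← ENNReal.ofReal_tsum_of_nonneg hf h, ENNReal.toReal_ofReal (tsum_nonneg hf)]
  · rw [tsum_eq_zero_of_not_summable h]
    have : ∑' n, ENNReal.ofReal (f n) = ⊤ := by
      by_contra htop
      exact h ((ENNReal.summable_toReal htop).congr fun n => ENNReal.toReal_ofReal (hf n))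
    simp [this]

lemma lint_zeta {σ : ℝ} (hσ : 0 < σ) :
    ∫⁻ x in Set.Ioi (0:ℝ), ENNReal.ofReal (x ^ (σ - 1) / (Real.exp x - 1))
      = ENNReal.ofReal (Real.Gamma σ) * ∑' n : ℕ, ENNReal.ofReal (1 / ((n:ℝ) + 1) ^ σ) := by
  have step1 : ∫⁻ x in Set.Ioi (0:ℝ), ENNReal.ofReal (x ^ (σ - 1) / (Real.exp x - 1))
      = ∫⁻ x in Set.Ioi (0:ℝ),
          ∑' n : ℕ, ENNReal.ofReal (x ^ (σ - 1) * Real.exp (-(((n:ℝ) + 1) * x))) := by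
    refine setLIntegral_congr_fun_ae measurableSet_Ioi (ae_of_all _ fun x hx => ?_)
    have h1 : x ^ (σ - 1) / (Real.exp x - 1)
        = ∑' n : ℕ, x ^ (σ - 1) * Real.exp (-(((n:ℝ) + 1) * x)) := by
      rw [tsum_mul_left, geom_series x hx]
      ring
    rw [h1, ENNReal.ofReal_tsum_of_nonneg]
    · exact fun n => mul_nonneg (rpow_nonneg hx.le _) (exp_pos _).le
    · exact (summable_exp_geom x hx).mul_left _
  rw [step1, lintegral_tsum fun n => Measurable.aemeasurable (by fun_prop)]
  have step3 : ∀ n : ℕ,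
      ∫⁻ x in Set.Ioi (0:ℝ), ENNReal.ofReal (x ^ (σ - 1) * Real.exp (-(((n:ℝ) + 1) * x)))
        = ENNReal.ofReal (1 / ((n:ℝ) + 1) ^ σ) * ENNReal.ofReal (Real.Gamma σ) := by
    intro n
    rw [lint_gamma hσ (by positivity), ENNReal.ofReal_mul (by positivity)]
    congr 2
    rw [one_div, Real.inv_rpow (by positivity), one_div]
  simp_rw [step3]
  rw [ENNReal.tsum_mul_right, mul_comm]

theorem mellin_extended_zeta (α s : ℝ) (hα : 0 < α) (hs : 0 < s) :
    (∫ p in Set.Ioi (0 : ℝ), p ^ (s - 1) * zetaP p α) =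
      Real.Gamma s * Real.Gamma (α + s) / Real.Gamma α * rzeta (α + s) := by
  have hΓα : 0 < Real.Gamma α := Real.Gamma_pos_of_pos hα
  set I : ℝ → ENNReal := fun p => ∫⁻ x in Set.Ioi (0:ℝ),
      ENNReal.ofReal (x ^ (α - 1) * Real.exp (-p / x) / (Real.exp x - 1)) with hIdef
  set S : ENNReal := ∑' n : ℕ, ENNReal.ofReal (1 / ((n:ℝ) + 1) ^ (α + s)) with hSdef
  have hFmeas : Measurable fun q : ℝ × ℝ =>
      q.2 ^ (α - 1) * Real.exp (-q.1 / q.2) / (Real.exp q.2 - 1) := by fun_prop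
  -- Step A : zetaP as toReal of a lintegral
  have hA : ∀ p : ℝ, zetaP p α = (1 / Real.Gamma α) * (I p).toReal := by
    intro p
    unfold zetaP
    congr 1
    apply integral_eq_lintegral_of_nonneg_ae
    · filter_upwards [ae_restrict_mem measurableSet_Ioi] with x hx
      have h1 : (1:ℝ) < Real.exp x := Real.one_lt_exp_iff.2 hx
      exact div_nonneg (mul_nonneg (rpow_nonneg hx.le _) (exp_pos _).le) (by linarith)
    · exact (hFmeas.comp (measurable_const.prodMk measurable_id)).aestronglyMeasurable
  -- Step B : finiteness of I p for p > 0
  have hIfin : ∀ p : ℝ, 0 < p → I p ≠ ⊤ := by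
    intro p hp
    have hbound : I p ≤ ENNReal.ofReal p⁻¹ *
        ∫⁻ x in Set.Ioi (0:ℝ), ENNReal.ofReal (x ^ (α + 1 - 1) / (Real.exp x - 1)) := by
      rw [← lintegral_const_mul' _ _ ENNReal.ofReal_ne_top]
      refine lintegral_mono_ae ?_
      filter_upwards [ae_restrict_mem measurableSet_Ioi] with x hx
      rw [← ENNReal.ofReal_mul (by positivity)]
      apply ENNReal.ofReal_le_ofReal
      have hex : (0:ℝ) < Real.exp x - 1 := by
        have := Real.one_lt_exp_iff.2 (show (0:ℝ) < x from hx); linarith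
      have h2 : Real.exp (-p / x) ≤ p⁻¹ * x := by
        have hpx : (0:ℝ) < p / x := div_pos hp hx
        have hle : p / x ≤ Real.exp (p / x) := by linarith [Real.add_one_le_exp (p / x)]
        have hinv : (Real.exp (p / x))⁻¹ ≤ (p / x)⁻¹ := inv_anti₀ hpx hle
        rw [neg_div, Real.exp_neg]
        calc (Real.exp (p / x))⁻¹ ≤ (p / x)⁻¹ := hinv
          _ = p⁻¹ * x := by field_simp
      have key : x ^ (α - 1) * Real.exp (-p / x) ≤ p⁻¹ * x ^ (α + 1 - 1) := by
        have hxa : x ^ (α + 1 - 1) = x ^ (α - 1) * x := by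
          rw [show α + 1 - 1 = (α - 1) + 1 by ring, Real.rpow_add hx, Real.rpow_one]
        rw [hxa]
        calc x ^ (α - 1) * Real.exp (-p / x) ≤ x ^ (α - 1) * (p⁻¹ * x) :=
              mul_le_mul_of_nonneg_left h2 (rpow_nonneg hx.le _)
          _ = p⁻¹ * (x ^ (α - 1) * x) := by ring
      calc x ^ (α - 1) * Real.exp (-p / x) / (Real.exp x - 1)
          ≤ p⁻¹ * x ^ (α + 1 - 1) / (Real.exp x - 1) := by
            exact div_le_div_of_nonneg_right key hex.le |>.trans_eq rfl
        _ = p⁻¹ * (x ^ (α + 1 - 1) / (Real.exp x - 1)) := by ring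
    refine ne_top_of_le_ne_top ?_ hbound
    rw [lint_zeta (by linarith : (0:ℝ) < α + 1)]
    have hsum := summable_shift (by linarith : (1:ℝ) < α + 1)
    rw [← ENNReal.ofReal_tsum_of_nonneg (fun n => by positivity) hsum]
    exact ENNReal.mul_ne_top ENNReal.ofReal_ne_top
      (ENNReal.mul_ne_top ENNReal.ofReal_ne_top ENNReal.ofReal_ne_top)
  -- Step 1 : rewrite the integrand of the outer lintegral
  have hstep1 : ∀ p ∈ Set.Ioi (0:ℝ), ENNReal.ofReal (p ^ (s - 1) * zetaP p α)
      = ENNReal.ofReal (1 / Real.Gamma α) *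
        ∫⁻ x in Set.Ioi (0:ℝ), ENNReal.ofReal (p ^ (s - 1)) *
          ENNReal.ofReal (x ^ (α - 1) * Real.exp (-p / x) / (Real.exp x - 1)) := by
    intro p hp
    rw [hA p,
      show p ^ (s - 1) * ((1 / Real.Gamma α) * (I p).toReal)
        = (1 / Real.Gamma α) * (p ^ (s - 1) * (I p).toReal) from by ring,
      ENNReal.ofReal_mul (one_div_pos.2 hΓα).le,
      ENNReal.ofReal_mul (rpow_nonneg (le_of_lt hp) _),
      ENNReal.ofReal_toReal (hIfin p hp)]
    congr 1
    exact (lintegral_const_mul' _ _ ENNReal.ofReal_ne_top).symm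
  -- inner integral over p, for fixed x > 0
  have hinner : ∀ x ∈ Set.Ioi (0:ℝ),
      (∫⁻ p in Set.Ioi (0:ℝ), ENNReal.ofReal (p ^ (s - 1)) *
        ENNReal.ofReal (x ^ (α - 1) * Real.exp (-p / x) / (Real.exp x - 1)))
      = ENNReal.ofReal (Real.Gamma s) * ENNReal.ofReal (x ^ (α + s - 1) / (Real.exp x - 1)) := by
    intro x hx
    have hx0 : (0:ℝ) < x := hx
    have hex : (0:ℝ) < Real.exp x - 1 := by
      have := Real.one_lt_exp_iff.2 hx0; linarith
    have hc : (0:ℝ) ≤ x ^ (α - 1) / (Real.exp x - 1) := by positivity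
    have h1 : ∀ p ∈ Set.Ioi (0:ℝ), ENNReal.ofReal (p ^ (s - 1)) *
        ENNReal.ofReal (x ^ (α - 1) * Real.exp (-p / x) / (Real.exp x - 1))
        = ENNReal.ofReal (x ^ (α - 1) / (Real.exp x - 1)) *
          ENNReal.ofReal (p ^ (s - 1) * Real.exp (-(x⁻¹ * p))) := by
      intro p hp
      rw [← ENNReal.ofReal_mul (rpow_nonneg (le_of_lt hp) _), ← ENNReal.ofReal_mul hc]
      congr 1
      rw [show -p / x = -(x⁻¹ * p) from by ring]
      ring
    rw [setLIntegral_congr_fun_ae measurableSet_Ioi (ae_of_all _ h1),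
      lintegral_const_mul' _ _ ENNReal.ofReal_ne_top,
      lint_gamma hs (inv_pos.2 hx0), one_div, inv_inv,
      ← ENNReal.ofReal_mul hc,
      show x ^ (α - 1) / (Real.exp x - 1) * (x ^ s * Real.Gamma s)
        = Real.Gamma s * (x ^ (α - 1) * x ^ s / (Real.exp x - 1)) from by ring,
      ← Real.rpow_add hx0,
      show α - 1 + s = α + s - 1 from by ring,
      ENNReal.ofReal_mul (Real.Gamma_nonneg_of_nonneg hs.le)]
  -- the main lintegral computation
  have hL : (∫⁻ p in Set.Ioi (0:ℝ), ENNReal.ofReal (p ^ (s - 1) * zetaP p α))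
      = ENNReal.ofReal (1 / Real.Gamma α) * (ENNReal.ofReal (Real.Gamma s) *
        (ENNReal.ofReal (Real.Gamma (α + s)) * S)) := by
    rw [setLIntegral_congr_fun_ae measurableSet_Ioi (ae_of_all _ hstep1),
      lintegral_const_mul' _ _ ENNReal.ofReal_ne_top]
    congr 1
    rw [lintegral_lintegral_swap (Measurable.aemeasurable (by fun_prop)),
      setLIntegral_congr_fun_ae measurableSet_Ioi (ae_of_all _ hinner),
      lintegral_const_mul' _ _ ENNReal.ofReal_ne_top,
      lint_zeta (by linarith : (0:ℝ) < α + s)]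
  -- measurability of the outer integrand
  have hzm : StronglyMeasurable fun p : ℝ => zetaP p α := by
    have hint : StronglyMeasurable fun p : ℝ =>
        ∫ x in Set.Ioi (0:ℝ), x ^ (α - 1) * Real.exp (-p / x) / (Real.exp x - 1) :=
      (hFmeas.stronglyMeasurable.integral_prod_right')
    exact hint.const_mul _
  have hmeas : AEStronglyMeasurable (fun p : ℝ => p ^ (s - 1) * zetaP p α)
      (volume.restrict (Set.Ioi (0:ℝ))) := by
    have h1 : Measurable fun p : ℝ => p ^ (s - 1) := by fun_prop
    exact (h1.stronglyMeasurable.mul hzm).aestronglyMeasurable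
  have hnn : 0 ≤ᵐ[volume.restrict (Set.Ioi (0:ℝ))] fun p : ℝ => p ^ (s - 1) * zetaP p α := by
    filter_upwards [ae_restrict_mem measurableSet_Ioi] with p hp
    have h1 : 0 ≤ zetaP p α := by
      rw [hA p]
      exact mul_nonneg (one_div_pos.2 hΓα).le ENNReal.toReal_nonneg
    exact mul_nonneg (rpow_nonneg (le_of_lt hp) _) h1
  rw [integral_eq_lintegral_of_nonneg_ae hnn hmeas, hL,
    ENNReal.toReal_mul, ENNReal.toReal_mul, ENNReal.toReal_mul,
    ENNReal.toReal_ofReal (one_div_pos.2 hΓα).le,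
    ENNReal.toReal_ofReal (Real.Gamma_nonneg_of_nonneg hs.le),
    ENNReal.toReal_ofReal (Real.Gamma_nonneg_of_nonneg (by linarith : (0:ℝ) ≤ α + s))]
  have hrz : rzeta (α + s) = S.toReal := by
    unfold rzeta
    exact tsum_toReal_eq fun n => by positivity
  rw [← hrz]
  ring
end

section
/- Let p \ge 0. Then for all x > 0, e^{-p/x} \le C_p(x), where C_p(x) = 2x/(p e^2) for 0 < x < p/2, C_p(x) = 4x/(p e^2) - 1/e^2 for p/2 \le x < (p/4)(1+e^2), and C_p(x) = 1 for x \ge (p/4)(1+e^2). -/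
open Real

lemma exp_kernel_aux_deriv (s : ℝ) :
    HasDerivAt (fun s : ℝ => (2 + s) * Real.exp (-s) + s)
      (1 * Real.exp (-s) + (2 + s) * (Real.exp (-s) * -1) + 1) s := by
  have h1 : HasDerivAt (fun s : ℝ => 2 + s) 1 s := by
    simpa using (hasDerivAt_id s).const_add 2
  have h2 : HasDerivAt (fun s : ℝ => Real.exp (-s)) (Real.exp (-s) * -1) s := by
    have := ((hasDerivAt_id s).neg).exp
    simpa using this
  exact (h1.mul h2).add (hasDerivAt_id s)

lemma exp_kernel_key (s : ℝ) (hs : 0 ≤ s) : (2 - s) * Real.exp s ≤ 2 + s := by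
  have hmono : MonotoneOn (fun s : ℝ => (2 + s) * Real.exp (-s) + s) (Set.Ici 0) := by
    apply monotoneOn_of_deriv_nonneg (convex_Ici 0)
    · fun_prop
    · intro x hx
      exact (exp_kernel_aux_deriv x).differentiableAt.differentiableWithinAt
    · intro x hx
      rw [(exp_kernel_aux_deriv x).deriv]
      have hmul : Real.exp (-x) * Real.exp x = 1 := by
        rw [← Real.exp_add]; simp
      have h1 : x + 1 ≤ Real.exp x := Real.add_one_le_exp x
      have h2 : 0 < Real.exp (-x) := Real.exp_pos (-x)
      nlinarith [h1, h2, hmul]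
  have h0 : (0 : ℝ) ∈ Set.Ici (0 : ℝ) := Set.self_mem_Ici
  have := hmono h0 (Set.mem_Ici.mpr hs) hs
  simp only [neg_zero, add_zero, Real.exp_zero, mul_one] at this
  have hmul : Real.exp (-s) * Real.exp s = 1 := by
    rw [← Real.exp_add]; simp
  nlinarith [this, Real.exp_pos s, Real.exp_pos (-s), hmul]

theorem exp_kernel_piecewise_bound (p : ℝ) (hp : 0 ≤ p) :
    ∀ x : ℝ, 0 < x →
      Real.exp (-p / x) ≤
        (if x < p / 2 then 2 * x / (p * Real.exp 2)
         else if x < p / 4 * (1 + Real.exp 2) then 4 * x / (p * Real.exp 2) - 1 / Real.exp 2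
         else 1) := by
  intro x hx
  rcases eq_or_lt_of_le hp with hp0 | hp0
  · -- p = 0
    rw [← hp0]
    have h1 : ¬ x < (0:ℝ) / 2 := by norm_num; linarith
    have h2 : ¬ x < (0:ℝ) / 4 * (1 + Real.exp 2) := by
      norm_num
      nlinarith [Real.exp_pos 2]
    rw [if_neg h1, if_neg h2]
    simp
  · have he2 : (0:ℝ) < Real.exp 2 := Real.exp_pos 2
    set t : ℝ := p / x with ht
    have htpos : 0 < t := div_pos hp0 hx
    have hxt : -p / x = -t := by rw [ht, neg_div]
    have hmul2 : Real.exp (-t) * Real.exp t = 1 := by rw [← Real.exp_add]; simp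
    have hexp2 : Real.exp (2 - t) = Real.exp 2 * Real.exp (-t) := by
      rw [← Real.exp_add]; ring_nf
    split_ifs with h1 h2
    · -- x < p/2 : t > 2
      have ht2 : 2 < t := by
        rw [ht, lt_div_iff₀ hx]; linarith
      -- exp(t-2) ≥ t-1 ≥ t/2, so t * exp(2-t) ≤ 2
      have hA : t - 1 ≤ Real.exp (t - 2) := by
        have := Real.add_one_le_exp (t - 2)
        linarith
      have hB : Real.exp (t - 2) * Real.exp (2 - t) = 1 := by
        rw [← Real.exp_add]; ring_nf; exact Real.exp_zero
      have hkey : t * Real.exp (2 - t) ≤ 2 := by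
        have hpos := Real.exp_pos (2 - t)
        nlinarith [hA, hB, hpos]
      -- goal : exp(-t) ≤ 2*x/(p * e^2) = 2/(t*e^2)
      rw [hxt]
      have hrw : 2 * x / (p * Real.exp 2) = 2 / (t * Real.exp 2) := by
        rw [ht]; field_simp
      rw [hrw, le_div_iff₀ (by positivity)]
      calc Real.exp (-t) * (t * Real.exp 2) = t * Real.exp (2 - t) := by
            rw [hexp2]; ring
        _ ≤ 2 := hkey
    · -- p/2 ≤ x : t ≤ 2
      have ht2 : t ≤ 2 := by
        rw [ht, div_le_iff₀ hx]; linarith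
      have hkey := exp_kernel_key (2 - t) (by linarith)
      -- (2-(2-t)) * exp (2-t) ≤ 2 + (2-t), i.e. t * exp(2-t) ≤ 4 - t
      have hkey' : t * Real.exp (2 - t) ≤ 4 - t := by
        have : (2 - (2 - t)) * Real.exp (2 - t) ≤ 2 + (2 - t) := hkey
        linarith [this]
      rw [hxt]
      have hrw : 4 * x / (p * Real.exp 2) - 1 / Real.exp 2 = (4 - t) / (t * Real.exp 2) := by
        rw [ht]; field_simp
      rw [hrw, le_div_iff₀ (by positivity)]
      calc Real.exp (-t) * (t * Real.exp 2) = t * Real.exp (2 - t) := by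
            rw [hexp2]; ring
        _ ≤ 4 - t := hkey'
    · -- x ≥ (p/4)(1+e^2)
      rw [hxt]
      calc Real.exp (-t) ≤ Real.exp 0 := Real.exp_le_exp.mpr (by linarith)
        _ = 1 := Real.exp_zero
end

section
/- The function f(x) = x/(e^x - 1), extended by f(0) = 1, is monotone decreasing and convex on (0, \infty). -/
open Real

private lemma key1 (x : ℝ) : Real.exp x * (1 - x) ≤ 1 := by
  have h := Real.add_one_le_exp (-x)
  have hp := Real.exp_pos x
  have : Real.exp x * (1 - x) ≤ Real.exp x * Real.exp (-x) := by nlinarith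
  calc Real.exp x * (1 - x) ≤ Real.exp x * Real.exp (-x) := this
    _ = 1 := by rw [← Real.exp_add]; simp

private lemma key2 (x : ℝ) (hx : 0 ≤ x) :
    2 * (Real.exp x - 1) ≤ x * (Real.exp x + 1) := by
  set g : ℝ → ℝ := fun y => y * (Real.exp y + 1) - 2 * (Real.exp y - 1) with hg
  have hd : ∀ y : ℝ, HasDerivAt g (1 * (Real.exp y + 1) + y * Real.exp y - 2 * Real.exp y) y := by
    intro y
    exact ((hasDerivAt_id y).mul ((Real.hasDerivAt_exp y).add_const 1)).sub
      (((Real.hasDerivAt_exp y).sub_const 1).const_mul 2)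
  have hmono : Monotone g := by
    apply monotone_of_deriv_nonneg
    · exact fun y => (hd y).differentiableAt
    · intro y
      rw [(hd y).deriv]
      nlinarith [key1 y, Real.exp_pos y]
  have h0 : g 0 = 0 := by simp [hg]
  have := hmono hx
  rw [h0] at this
  simp only [hg] at this
  linarith

theorem kernel_antitone_convex :
    AntitoneOn (fun x : ℝ => x / (Real.exp x - 1)) (Set.Ioi 0) ∧
      ConvexOn ℝ (Set.Ioi 0) (fun x : ℝ => x / (Real.exp x - 1)) := by
  set f : ℝ → ℝ := fun x => x / (Real.exp x - 1) with hf
  have hden : ∀ x : ℝ, x ∈ Set.Ioi (0:ℝ) → 0 < Real.exp x - 1 := by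
    intro x hx
    have : (1:ℝ) < Real.exp x := by
      rw [← Real.exp_zero]
      exact Real.exp_lt_exp.mpr hx
    linarith
  have hfd : ∀ x ∈ Set.Ioi (0:ℝ), HasDerivAt f
      ((1 * (Real.exp x - 1) - x * Real.exp x) / (Real.exp x - 1) ^ 2) x := by
    intro x hx
    exact (hasDerivAt_id x).div ((Real.hasDerivAt_exp x).sub_const 1) (ne_of_gt (hden x hx))
  set g1 : ℝ → ℝ := fun x => (1 * (Real.exp x - 1) - x * Real.exp x) / (Real.exp x - 1) ^ 2
    with hg1
  have hderiv : ∀ x ∈ Set.Ioi (0:ℝ), deriv f x = g1 x := fun x hx => (hfd x hx).deriv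
  have hdiff : DifferentiableOn ℝ f (Set.Ioi 0) :=
    fun x hx => ((hfd x hx).differentiableAt).differentiableWithinAt
  have hcont : ContinuousOn f (Set.Ioi 0) := hdiff.continuousOn
  have hderiv_nonpos : ∀ x ∈ Set.Ioi (0:ℝ), deriv f x ≤ 0 := by
    intro x hx
    rw [hderiv x hx]
    apply div_nonpos_of_nonpos_of_nonneg
    · have := key1 x
      nlinarith
    · positivity
  -- second derivative
  have hg1d : ∀ x ∈ Set.Ioi (0:ℝ), HasDerivAt g1
      (((Real.exp x - (1 * Real.exp x + x * Real.exp x)) * (Real.exp x - 1) ^ 2 -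
        (1 * (Real.exp x - 1) - x * Real.exp x) * (2 * (Real.exp x - 1) ^ 1 * Real.exp x)) /
        ((Real.exp x - 1) ^ 2) ^ 2) x := by
    intro x hx
    have hne : (Real.exp x - 1) ^ 2 ≠ 0 := pow_ne_zero 2 (ne_of_gt (hden x hx))
    have hN : HasDerivAt (fun y => 1 * (Real.exp y - 1) - y * Real.exp y)
        (Real.exp x - (1 * Real.exp x + x * Real.exp x)) x := by
      have h1 : HasDerivAt (fun y => 1 * (Real.exp y - 1)) (Real.exp x) x := by
        simpa using ((Real.hasDerivAt_exp x).sub_const 1).const_mul 1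
      exact h1.sub ((hasDerivAt_id x).mul (Real.hasDerivAt_exp x))
    have hD : HasDerivAt (fun y => (Real.exp y - 1) ^ 2)
        (2 * (Real.exp x - 1) ^ 1 * Real.exp x) x := by
      simpa using ((Real.hasDerivAt_exp x).sub_const 1).fun_pow 2
    exact hN.div hD hne
  have hEq : ∀ x ∈ Set.Ioi (0:ℝ), deriv f =ᶠ[nhds x] g1 := by
    intro x hx
    filter_upwards [isOpen_Ioi.mem_nhds hx] with y hy using hderiv y hy
  have hdiff2 : DifferentiableOn ℝ (deriv f) (Set.Ioi 0) := by
    intro x hx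
    have : DifferentiableAt ℝ g1 x := (hg1d x hx).differentiableAt
    exact (this.congr_of_eventuallyEq (hEq x hx)).differentiableWithinAt
  have h2nonneg : ∀ x ∈ Set.Ioi (0:ℝ), 0 ≤ deriv (deriv f) x := by
    intro x hx
    rw [(hEq x hx).deriv_eq, (hg1d x hx).deriv]
    apply div_nonneg _ (by positivity)
    have hnum : (Real.exp x - (1 * Real.exp x + x * Real.exp x)) * (Real.exp x - 1) ^ 2 -
        (1 * (Real.exp x - 1) - x * Real.exp x) * (2 * (Real.exp x - 1) ^ 1 * Real.exp x) =
        (Real.exp x - 1) * Real.exp x * (x * (Real.exp x + 1) - 2 * (Real.exp x - 1)) := by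
      ring
    rw [hnum]
    have h1 := hden x hx
    have h2 := key2 x (le_of_lt hx)
    have h3 := Real.exp_pos x
    nlinarith
  constructor
  · apply antitoneOn_of_deriv_nonpos (convex_Ioi 0) hcont
    · rwa [interior_Ioi]
    · rwa [interior_Ioi]
  · apply convexOn_of_deriv2_nonneg (convex_Ioi 0) hcont
    · rwa [interior_Ioi]
    · rwa [interior_Ioi]
    · intro x hx
      rw [interior_Ioi] at hx
      simpa [Function.iterate_succ, Function.comp] using h2nonneg x hx
end

section
/- Let \alpha > 1 and b > 0. Then \frac{b^\alpha}{(\alpha-1)(e^b-1)} \le \int_0^b \frac{x^{\alpha-1}}{e^x-1} dx \le \frac{b^{\alpha-1}}{\alpha}\Big(\frac{1}{\alpha-1} + \frac{b}{e^b-1}\Big). -/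
open MeasureTheory Real Set

-- e^t - 1 ≥ t e^{t/2} for t ≥ 0
lemma aux_exp_sub_one (t : ℝ) (ht : 0 < t) : t * Real.exp (t/2) ≤ Real.exp t - 1 := by
  have h := Real.self_lt_sinh_iff.mpr (by positivity : 0 < t/2)
  rw [Real.sinh_eq] at h
  have h2 : Real.exp (t/2) * Real.exp (t/2) = Real.exp t := by
    rw [← Real.exp_add]; ring_nf
  have h3 : Real.exp (t/2) * Real.exp (-(t/2)) = 1 := by
    rw [← Real.exp_add]; simp
  nlinarith [Real.exp_pos (t/2), Real.exp_pos (-(t/2))]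

lemma aux_h_anti : AntitoneOn (fun t : ℝ => t⁻¹ - (Real.exp t - 1)⁻¹) (Set.Ioi 0) := by
  have hd : ∀ t ∈ Set.Ioi (0:ℝ), HasDerivAt (fun t : ℝ => t⁻¹ - (Real.exp t - 1)⁻¹)
      (-(t^2)⁻¹ - (-Real.exp t / (Real.exp t - 1)^2)) t := by
    intro t ht
    have htpos : (0:ℝ) < t := ht
    have hexp : (0:ℝ) < Real.exp t - 1 := by
      nlinarith [Real.add_one_le_exp t]
    have h1 : HasDerivAt (fun t : ℝ => t⁻¹) (-(t^2)⁻¹) t := by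
      simpa using (hasDerivAt_inv (ne_of_gt htpos))
    have h2 : HasDerivAt (fun t : ℝ => (Real.exp t - 1)⁻¹)
        (-Real.exp t / (Real.exp t - 1)^2) t := by
      have : HasDerivAt (fun t : ℝ => Real.exp t - 1) (Real.exp t) t :=
        (Real.hasDerivAt_exp t).sub_const 1
      exact this.inv (ne_of_gt hexp)
    exact h1.sub h2
  apply antitoneOn_of_deriv_nonpos (convex_Ioi 0)
  · intro t ht
    exact (hd t ht).continuousAt.continuousWithinAt
  · rw [interior_Ioi]
    exact fun t ht => (hd t ht).differentiableAt.differentiableWithinAt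
  · rw [interior_Ioi]
    intro t ht
    rw [(hd t ht).deriv]
    have htpos : (0:ℝ) < t := ht
    have hexp : (0:ℝ) < Real.exp t - 1 := by
      nlinarith [Real.add_one_le_exp t]
    have key : t^2 * Real.exp t ≤ (Real.exp t - 1)^2 := by
      have h1 := aux_exp_sub_one t htpos
      have h2 : Real.exp (t/2) * Real.exp (t/2) = Real.exp t := by
        rw [← Real.exp_add]; ring_nf
      nlinarith [Real.exp_pos (t/2), mul_pos htpos (Real.exp_pos (t/2))]
    have : Real.exp t / (Real.exp t - 1)^2 ≤ 1 / t^2 := by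
      rw [div_le_div_iff₀ (by positivity) (by positivity)]
      nlinarith
    have h1t : (t^2)⁻¹ = 1 / t^2 := by rw [one_div]
    rw [neg_div]
    linarith

lemma aux_g_lower (x b : ℝ) (hx : 0 < x) (hxb : x ≤ b) :
    b / (Real.exp b - 1) ≤ x / (Real.exp x - 1) := by
  have hb : 0 < b := lt_of_lt_of_le hx hxb
  have hex : (0:ℝ) < Real.exp x - 1 := by nlinarith [Real.add_one_le_exp x]
  have heb : (0:ℝ) < Real.exp b - 1 := by nlinarith [Real.add_one_le_exp b]
  -- convexity: exp x ≤ 1 - x/b + (x/b) exp b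
  have h0 : (0:ℝ) ≤ 1 - x/b := by rw [sub_nonneg]; exact div_le_one_of_le₀ hxb hb.le
  have h1 : (0:ℝ) ≤ x/b := by positivity
  have hconv := convexOn_exp.2 (Set.mem_univ (0:ℝ)) (Set.mem_univ b) h0 h1 (by ring)
  simp only [smul_eq_mul, mul_zero, zero_add, Real.exp_zero, mul_one] at hconv
  rw [div_mul_cancel₀ _ (ne_of_gt hb)] at hconv
  have key : b * Real.exp x ≤ b - x + x * Real.exp b := by
    have h2 := mul_le_mul_of_nonneg_left hconv hb.le
    have e : b * (1 - x/b + x/b * Real.exp b) = b - x + x * Real.exp b := by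
      field_simp
    rw [e] at h2
    exact h2
  rw [div_le_div_iff₀ heb hex]
  linarith

lemma aux_g_upper (x b : ℝ) (hx : 0 < x) (hxb : x ≤ b) :
    x / (Real.exp x - 1) ≤ 1 - x/b + x/(Real.exp b - 1) := by
  have hb : 0 < b := lt_of_lt_of_le hx hxb
  have hex : (0:ℝ) < Real.exp x - 1 := by nlinarith [Real.add_one_le_exp x]
  have heb : (0:ℝ) < Real.exp b - 1 := by nlinarith [Real.add_one_le_exp b]
  have h := aux_h_anti (Set.mem_Ioi.mpr hx) (Set.mem_Ioi.mpr hb) hxb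
  simp only at h
  -- h : b⁻¹ - (exp b - 1)⁻¹ ≤ x⁻¹ - (exp x - 1)⁻¹
  have h2 : x * (b⁻¹ - (Real.exp b - 1)⁻¹) ≤ x * (x⁻¹ - (Real.exp x - 1)⁻¹) :=
    mul_le_mul_of_nonneg_left h hx.le
  have e1 : x * (x⁻¹ - (Real.exp x - 1)⁻¹) = 1 - x / (Real.exp x - 1) := by
    field_simp
  have e2 : x * (b⁻¹ - (Real.exp b - 1)⁻¹) = x/b - x/(Real.exp b - 1) := by
    field_simp
  rw [e1, e2] at h2
  linarith

theorem kernel_integral_zero_b_bounds (α b : ℝ) (hα : 1 < α) (hb : 0 < b) :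
    (b ^ α / ((α - 1) * (Real.exp b - 1)) ≤ ∫ x in (0 : ℝ)..b, x ^ (α - 1) / (Real.exp x - 1)) ∧
      (∫ x in (0 : ℝ)..b, x ^ (α - 1) / (Real.exp x - 1)) ≤
        b ^ (α - 1) / α * (1 / (α - 1) + b / (Real.exp b - 1)) := by
  have heb : (0:ℝ) < Real.exp b - 1 := by nlinarith [Real.add_one_le_exp b]
  have hα1 : (0:ℝ) < α - 1 := by linarith
  have hα0 : (0:ℝ) < α := by linarith
  set f : ℝ → ℝ := fun x => x ^ (α - 1) / (Real.exp x - 1) with hf_def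
  set c : ℝ := 1/b - 1/(Real.exp b - 1) with hc_def
  set L : ℝ → ℝ := fun x => x ^ (α - 2) * (b / (Real.exp b - 1)) with hL_def
  set U : ℝ → ℝ := fun x => x ^ (α - 2) - c * x ^ (α - 1) with hU_def
  have hrestr : volume.restrict (Set.Icc (0:ℝ) b) = volume.restrict (Set.Ioc (0:ℝ) b) :=
    (Measure.restrict_congr_set Ioc_ae_eq_Icc).symm
  have hI2 : IntervalIntegrable (fun x : ℝ => x ^ (α - 2)) volume 0 b :=
    intervalIntegral.intervalIntegrable_rpow' (by linarith)
  have hI1 : IntervalIntegrable (fun x : ℝ => x ^ (α - 1)) volume 0 b :=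
    intervalIntegral.intervalIntegrable_rpow' (by linarith)
  have hL : IntervalIntegrable L volume 0 b := hI2.mul_const _
  have hU : IntervalIntegrable U volume 0 b := hI2.sub (hI1.const_mul c)
  -- key identities on (0, b]
  have hid : ∀ x : ℝ, 0 < x → x ^ (α - 2) * x = x ^ (α - 1) := by
    intro x hx
    rw [← Real.rpow_add_one (ne_of_gt hx), show α - 2 + 1 = α - 1 by ring]
  have hfx : ∀ x : ℝ, 0 < x → f x = x ^ (α - 2) * (x / (Real.exp x - 1)) := by
    intro x hx
    show x ^ (α - 1) / (Real.exp x - 1) = _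
    rw [← hid x hx]
    ring
  -- measurability of f
  have hmeas : AEStronglyMeasurable f (volume.restrict (Set.uIoc (0:ℝ) b)) := by
    apply Measurable.aestronglyMeasurable
    rw [hf_def]
    fun_prop
  have hfle : ∀ x ∈ Set.Ioc (0:ℝ) b, f x ≤ U x := by
    intro x hx
    rw [hfx x hx.1, hU_def]
    have h1 := aux_g_upper x b hx.1 hx.2
    have h2 : x ^ (α - 2) * (x / (Real.exp x - 1)) ≤
        x ^ (α - 2) * (1 - x/b + x/(Real.exp b - 1)) :=
      mul_le_mul_of_nonneg_left h1 (Real.rpow_nonneg hx.1.le _)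
    calc x ^ (α - 2) * (x / (Real.exp x - 1)) ≤
        x ^ (α - 2) * (1 - x/b + x/(Real.exp b - 1)) := h2
      _ = x ^ (α - 2) - c * (x ^ (α - 2) * x) := by rw [hc_def]; ring
      _ = x ^ (α - 2) - c * x ^ (α - 1) := by rw [hid x hx.1]
  have hLle : ∀ x ∈ Set.Ioc (0:ℝ) b, L x ≤ f x := by
    intro x hx
    rw [hfx x hx.1, hL_def]
    exact mul_le_mul_of_nonneg_left (aux_g_lower x b hx.1 hx.2) (Real.rpow_nonneg hx.1.le _)
  have hfnonneg : ∀ x ∈ Set.Ioc (0:ℝ) b, 0 ≤ f x := by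
    intro x hx
    have hex : (0:ℝ) < Real.exp x - 1 := by nlinarith [Real.add_one_le_exp x, hx.1]
    exact div_nonneg (Real.rpow_nonneg hx.1.le _) hex.le
  -- integrability of f
  have hf : IntervalIntegrable f volume 0 b := by
    apply hI2.mono_fun hmeas
    rw [Set.uIoc_of_le hb.le]
    refine (ae_restrict_iff' measurableSet_Ioc).2 (ae_of_all _ ?_)
    intro x hx
    have hex : (0:ℝ) < Real.exp x - 1 := by nlinarith [Real.add_one_le_exp x, hx.1]
    have h1 : f x ≤ x ^ (α - 2) := by
      rw [hfx x hx.1]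
      have : x / (Real.exp x - 1) ≤ 1 := by
        rw [div_le_one hex]; nlinarith [Real.add_one_le_exp x]
      nlinarith [Real.rpow_nonneg hx.1.le (α - 2)]
    simp only [Real.norm_eq_abs]
    rw [abs_of_nonneg (hfnonneg x hx), abs_of_nonneg (Real.rpow_nonneg hx.1.le _)]
    exact h1
  -- integral computations
  have hint2 : ∫ x in (0:ℝ)..b, x ^ (α - 2) = b ^ (α - 1) / (α - 1) := by
    rw [integral_rpow (Or.inl (by linarith))]
    rw [show α - 2 + 1 = α - 1 by ring, Real.zero_rpow (ne_of_gt hα1)]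
    ring
  have hint1 : ∫ x in (0:ℝ)..b, x ^ (α - 1) = b ^ α / α := by
    rw [integral_rpow (Or.inl (by linarith))]
    rw [show α - 1 + 1 = α by ring, Real.zero_rpow (ne_of_gt hα0)]
    ring
  have hba : b ^ (α - 1) * b = b ^ α := by
    rw [← Real.rpow_add_one (ne_of_gt hb), show α - 1 + 1 = α by ring]
  constructor
  · have hmono := intervalIntegral.integral_mono_ae_restrict hb.le hL hf
      (by rw [hrestr]; exact (ae_restrict_iff' measurableSet_Ioc).2 (ae_of_all _ hLle))
    have hIL : ∫ x in (0:ℝ)..b, L x = b ^ α / ((α - 1) * (Real.exp b - 1)) := by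
      rw [hL_def, intervalIntegral.integral_mul_const, hint2, ← hba]
      field_simp
    rw [← hIL]
    exact hmono
  · have hmono := intervalIntegral.integral_mono_ae_restrict hb.le hf hU
      (by rw [hrestr]; exact (ae_restrict_iff' measurableSet_Ioc).2 (ae_of_all _ hfle))
    have hIU : ∫ x in (0:ℝ)..b, U x =
        b ^ (α - 1) / α * (1 / (α - 1) + b / (Real.exp b - 1)) := by
      rw [hU_def]
      rw [intervalIntegral.integral_sub hI2 (hI1.const_mul c),
        intervalIntegral.integral_const_mul, hint2, hint1, hc_def, ← hba]
      field_simp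
      ring
    rw [← hIU]
    exact hmono
end

section
/- Let \alpha > 1 and b > 0. Then \int_b^\infty \frac{x^{\alpha-1}}{e^x-1} dx \le \Gamma(\alpha)\zeta(\alpha) - \frac{b^\alpha}{(\alpha-1)(e^b-1)}. -/
open MeasureTheory Real

open Set in
lemma aux_summable {α : ℝ} (hα : 1 < α) : Summable (fun n : ℕ => 1 / ((n:ℝ)+1) ^ α) := by
  have h := Real.summable_one_div_nat_rpow.mpr hα
  have := (summable_nat_add_iff (f := fun n : ℕ => 1 / (n:ℝ) ^ α) 1).mpr h
  refine this.congr fun n => ?_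
  push_cast
  ring_nf

open Set in
lemma aux_integrable {α r : ℝ} (hα : 1 < α) (hr : 0 < r) :
    IntegrableOn (fun x : ℝ => x ^ (α-1) * Real.exp (-(r*x))) (Ioi 0) := by
  have := integrableOn_rpow_mul_exp_neg_mul_rpow (s := α - 1) (p := 1) (b := r)
    (by linarith) zero_lt_one hr
  refine this.congr_fun (fun x hx => ?_) measurableSet_Ioi
  simp only [Real.rpow_one]
  ring_nf

open Set in
lemma aux_hasSum {α x : ℝ} (hx : 0 < x) :
    HasSum (fun n : ℕ => x ^ (α-1) * Real.exp (-((n+1)*x)))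
      (x ^ (α-1) / (Real.exp x - 1)) := by
  have hr0 : (0:ℝ) ≤ Real.exp (-x) := (Real.exp_pos _).le
  have hr1 : Real.exp (-x) < 1 := Real.exp_lt_one_iff.mpr (by linarith)
  have hg := (hasSum_geometric_of_lt_one hr0 hr1).mul_left (x ^ (α-1) * Real.exp (-x))
  have h1 : (1:ℝ) < Real.exp x := by
    rw [show (1:ℝ) = Real.exp 0 by simp]; exact Real.exp_lt_exp.mpr hx
  have h2 : Real.exp (-x) * (Real.exp x - 1) = 1 - Real.exp (-x) := by
    rw [mul_sub, ← Real.exp_add]; simp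
  have key : ∀ n : ℕ, x ^ (α-1) * Real.exp (-x) * Real.exp (-x) ^ n
      = x ^ (α-1) * Real.exp (-((n+1)*x)) := by
    intro n
    rw [← Real.exp_nat_mul, mul_assoc, ← Real.exp_add]
    congr 2
    ring
  have hval : x ^ (α-1) * Real.exp (-x) * (1 - Real.exp (-x))⁻¹
      = x ^ (α-1) / (Real.exp x - 1) := by
    have hne : Real.exp x - 1 ≠ 0 := by linarith
    have hne2 : 1 - Real.exp (-x) ≠ 0 := by linarith
    field_simp
    linear_combination h2
  rw [← hval]
  simpa [key] using hg

open Set in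
lemma aux_lintegral {α : ℝ} (hα : 1 < α) :
    ∫⁻ x in Ioi 0, ENNReal.ofReal (x ^ (α-1) / (Real.exp x - 1)) =
      ENNReal.ofReal (Real.Gamma α * rzeta α) := by
  have hα0 : 0 < α := by linarith
  have step1 : ∫⁻ x in Ioi 0, ENNReal.ofReal (x ^ (α-1) / (Real.exp x - 1)) =
      ∫⁻ x in Ioi 0, ∑' n : ℕ, ENNReal.ofReal (x ^ (α-1) * Real.exp (-((n+1)*x))) := by
    refine setLIntegral_congr_fun measurableSet_Ioi (fun x hx => ?_)
    have hx0 : 0 < x := hx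
    rw [← (aux_hasSum (α := α) hx).tsum_eq,
      ENNReal.ofReal_tsum_of_nonneg (fun n => by positivity) (aux_hasSum hx).summable]
  rw [step1, lintegral_tsum (fun n => by fun_prop)]
  have step2 : ∀ n : ℕ, ∫⁻ x in Ioi 0, ENNReal.ofReal (x ^ (α-1) * Real.exp (-((n+1)*x)))
      = ENNReal.ofReal ((1/((n:ℝ)+1)) ^ α * Real.Gamma α) := by
    intro n
    have hr : (0:ℝ) < (n:ℝ)+1 := by positivity
    rw [← ofReal_integral_eq_lintegral_ofReal (aux_integrable hα hr)
      ((ae_restrict_iff' measurableSet_Ioi).mpr (ae_of_all _ (fun x hx => mul_nonneg (Real.rpow_nonneg (le_of_lt hx) _) (Real.exp_pos _).le))),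
      integral_rpow_mul_exp_neg_mul_Ioi hα0 hr]
  simp_rw [step2]
  rw [← ENNReal.ofReal_tsum_of_nonneg (fun n => by positivity)
      (((aux_summable hα).mul_right (Real.Gamma α)).congr (fun n => by
        rw [Real.div_rpow (by norm_num) (by positivity), Real.one_rpow]))]
  congr 1
  rw [rzeta, ← tsum_mul_left]
  exact tsum_congr fun n => by
    rw [Real.div_rpow (by norm_num) (by positivity), Real.one_rpow]; ring
open Set in
theorem kernel_tail_integral_bound (α b : ℝ) (hα : 1 < α) (hb : 0 < b) :
    (∫ x in Set.Ioi b, x ^ (α - 1) / (Real.exp x - 1)) ≤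
      Real.Gamma α * rzeta α - b ^ α / ((α - 1) * (Real.exp b - 1)) := by
  set f : ℝ → ℝ := fun x => x ^ (α - 1) / (Real.exp x - 1) with hf
  have hexp : ∀ x : ℝ, 0 < x → 0 < Real.exp x - 1 := fun x hx => by
    have : (1:ℝ) < Real.exp x := by
      rw [show (1:ℝ) = Real.exp 0 by simp]; exact Real.exp_lt_exp.mpr hx
    linarith
  have hmeas : Measurable f := by fun_prop
  have hnn : ∀ x ∈ Ioi (0:ℝ), 0 ≤ f x := fun x hx => by
    have hx0 : (0:ℝ) < x := hx
    exact div_nonneg (Real.rpow_nonneg hx0.le _) (hexp x hx0).le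
  have hnn_ae : 0 ≤ᵐ[volume.restrict (Ioi (0:ℝ))] f :=
    (ae_restrict_iff' measurableSet_Ioi).mpr (ae_of_all _ hnn)
  have hzeta_nn : 0 ≤ rzeta α := by
    rw [rzeta]; exact tsum_nonneg fun n => by positivity
  have hInt : IntegrableOn f (Ioi 0) := by
    refine ⟨hmeas.aestronglyMeasurable.restrict, ?_⟩
    rw [hasFiniteIntegral_iff_ofReal hnn_ae, aux_lintegral hα]
    exact ENNReal.ofReal_lt_top
  have hval : ∫ x in Ioi (0:ℝ), f x = Real.Gamma α * rzeta α := by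
    have h1 := ofReal_integral_eq_lintegral_ofReal hInt hnn_ae
    rw [aux_lintegral hα] at h1
    have h2 : 0 ≤ ∫ x in Ioi (0:ℝ), f x := setIntegral_nonneg measurableSet_Ioi hnn
    exact (ENNReal.ofReal_eq_ofReal_iff h2 (by positivity)).mp h1
  have hIb : IntegrableOn f (Ioi b) := hInt.mono_set (Ioi_subset_Ioi hb.le)
  have hIoc : IntegrableOn f (Ioc 0 b) := hInt.mono_set Ioc_subset_Ioi_self
  have hsplit : (∫ x in Ioc (0:ℝ) b, f x) + ∫ x in Ioi b, f x = Real.Gamma α * rzeta α := by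
    have hu := setIntegral_union (f := f) (μ := volume) Ioc_disjoint_Ioi_same
      measurableSet_Ioi hIoc hIb
    rw [Ioc_union_Ioi_eq_Ioi hb.le] at hu
    exact hu.symm.trans hval
  -- lower bound for the integral on (0, b]
  set g : ℝ → ℝ := fun x => b / (Real.exp b - 1) * x ^ (α - 2) with hg
  have hgint : IntegrableOn g (Ioc 0 b) := by
    have := (intervalIntegral.intervalIntegrable_rpow' (show (-1:ℝ) < α - 2 by linarith) (a := 0) (b := b))
    rw [intervalIntegrable_iff_integrableOn_Ioc_of_le hb.le] at this
    exact this.const_mul _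
  have hle : ∀ x ∈ Ioc (0:ℝ) b, g x ≤ f x := by
    intro x hx
    obtain ⟨hx0, hxb⟩ := hx
    have hxne : x ≠ 0 := hx0.ne'
    have hchord : Real.exp x - 1 ≤ x / b * (Real.exp b - 1) := by
      have hcvx := convexOn_exp.2 (mem_univ (0:ℝ)) (mem_univ b)
        (by rw [sub_nonneg, div_le_one hb]; exact hxb : (0:ℝ) ≤ 1 - x / b)
        (by positivity : (0:ℝ) ≤ x / b)
        (by field_simp; ring)
      simp only [smul_eq_mul, mul_zero, zero_add, Real.exp_zero] at hcvx
      rw [div_mul_cancel₀ _ hb.ne'] at hcvx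
      nlinarith [hcvx]
    have hd : (0:ℝ) < x / b * (Real.exp b - 1) :=
      mul_pos (div_pos hx0 hb) (hexp b hb)
    have h1 : x ^ (α - 1) / (x / b * (Real.exp b - 1)) ≤ f x :=
      div_le_div_of_nonneg_left (Real.rpow_nonneg hx0.le _) (hexp x hx0) hchord
    refine le_trans (le_of_eq ?_) h1
    have hxpow : x ^ (α - 1) = x ^ (α - 2) * x := by
      rw [← Real.rpow_add_one hxne]; ring_nf
    have he := (hexp b hb).ne'
    rw [hg, hxpow]
    field_simp
  have hlow : b ^ α / ((α - 1) * (Real.exp b - 1)) ≤ ∫ x in Ioc (0:ℝ) b, f x := by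
    have h1 : ∫ x in Ioc (0:ℝ) b, g x ≤ ∫ x in Ioc (0:ℝ) b, f x :=
      setIntegral_mono_on hgint hIoc measurableSet_Ioc hle
    refine le_trans (le_of_eq ?_) h1
    rw [hg, ← intervalIntegral.integral_of_le hb.le, intervalIntegral.integral_const_mul,
      integral_rpow (Or.inl (by linarith : (-1:ℝ) < α - 2))]
    rw [show α - 2 + 1 = α - 1 by ring, Real.zero_rpow (by linarith : α - 1 ≠ 0)]
    have hbpow : b ^ α = b ^ (α - 1) * b := by
      rw [← Real.rpow_add_one hb.ne']; ring_nf
    rw [hbpow]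
    have he := hexp b hb
    field_simp
    ring
  show (∫ x in Ioi b, f x) ≤ _
  linarith
end
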